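/- Let n, k, t be natural numbers with k ≥ 1, k² ≥ n, and t < ⌊n/k⌋. Then there exists an integer a with k ≤ a ≤ n and ⌊(n−a)/a⌋ = t. -/
import Mathlib


/-- If k² ≥ n and t < ⌊n/k⌋, there is a with k ≤ a ≤ n and ⌊(n-a)/a⌋ = t. -/
theorem mem_move_attains (n k t : ℕ) (hk : 1 ≤ k) (hsq : n ≤ k ^ 2)
    (ht : t < n / k) :
    ∃ a : ℕ, k ≤ a ∧ a ≤ n ∧ (n - a) / a = t := by
  set a := n / (t + 1) with ha
  have hk0 : 0 < k := hk
  have hkt : (t + 1) * k ≤ n := (Nat.le_div_iff_mul_le hk0).mp ht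
  have hka : k ≤ a := (Nat.le_div_iff_mul_le (Nat.succ_pos t)).mpr (by linarith [hkt])
  have ha0 : 0 < a := lt_of_lt_of_le hk0 hka
  have h1 : a * (t + 1) ≤ n := Nat.div_mul_le_self n (t + 1)
  have han : a ≤ n := Nat.div_le_self n (t + 1)
  have h2 : n < a * (t + 2) := by
    by_contra h
    push_neg at h
    -- then a ≤ n % (t+1) ≤ t, so k ≤ a ≤ t
    have hr : n % (t + 1) < t + 1 := Nat.mod_lt n (Nat.succ_pos t)
    have heq : n = a * (t + 1) + n % (t + 1) := by
      rw [ha, Nat.div_add_mod']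
    have har : a ≤ n % (t + 1) := by nlinarith
    have hat : a ≤ t := by omega
    have hkt' : k ≤ t := le_trans hka hat
    nlinarith
  refine ⟨a, hka, han, ?_⟩
  have hl : t ≤ (n - a) / a := (Nat.le_div_iff_mul_le ha0).mpr (by nlinarith [Nat.sub_add_cancel han])
  have hu : (n - a) / a < t + 1 := by
    rw [Nat.div_lt_iff_lt_mul ha0]
    have : n - a + a = n := Nat.sub_add_cancel han
    nlinarith
  omega
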